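/- If a is a connecting coordinate (σ_{aj} is non-constant for every j ≠ a) and α is not a connecting coordinate, then σ_{αa} is constant. -/
import Mathlib

/-- If `a` is a connecting coordinate and `α` is not a
connecting coordinate, then `σ α a` is constant. -/
theorem nonconnecting_constant_toward_connecting (n : ℕ) (hn : 3 ≤ n)
    (σ σ' : Fin n → Fin n → ℝ → ℝ)
    (hderiv : ∀ i j : Fin n, i ≠ j → ∀ x : ℝ, HasDerivAt (σ i j) (σ' i j x) x)
    (hne : ∀ i j : Fin n, i ≠ j → ∀ s t : ℝ, σ i j s + σ j i t ≠ 0)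
    (heq : ∀ i j k : Fin n, i ≠ j → j ≠ k → i ≠ k → ∀ s t u : ℝ,
      σ' j i t * σ' k i u * (σ j k t + σ k j u)
        - σ' j i t * σ' k j u * (σ k i u + σ i k s)
        - σ' k i u * σ' j k t * (σ i j s + σ j i t) = 0)
    (a α : Fin n)
    (ha : ∀ j : Fin n, j ≠ a → ∃ x, σ' a j x ≠ 0)
    (hα : ¬ ∀ j : Fin n, j ≠ α → ∃ x, σ' α j x ≠ 0) :
    ∀ x : ℝ, σ' α a x = 0 := by
  push_neg at hα
  obtain ⟨b, hbα, hb0⟩ := hα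
  have hαa : α ≠ a := by
    rintro rfl
    obtain ⟨x, hx⟩ := ha b hbα
    exact hx (hb0 x)
  by_cases hba : b = a
  · subst hba; exact hb0
  · intro t
    obtain ⟨u, hu⟩ := ha b hba
    have H := heq b α a hbα hαa hba 0 t u
    rw [hb0 t] at H
    have hne' := hne b α hbα 0 t
    simp only [zero_mul, mul_zero, zero_sub, sub_zero, neg_eq_zero] at H
    rcases mul_eq_zero.mp H with h | h
    · rcases mul_eq_zero.mp h with h' | h'
      · exact absurd h' hu
      · exact h'
    · exact absurd h hne'
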